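/- The abelianization of a finitely generated relatively simple group is a cyclic group of prime power order (possibly trivial). -/
import Mathlib

open Subgroup

/-- In a finitely generated group, every proper subgroup lies under a coatom. -/
private lemma exists_coatom_ge_of_fg' {A : Type*} [Group A] (h : Group.FG A)
    {H : Subgroup A} (hH : H ≠ ⊤) : ∃ M : Subgroup A, IsCoatom M ∧ H ≤ M := by
  obtain ⟨S, hScl, hSfin⟩ := Group.fg_iff.mp h
  have hchaincond : ∀ c ⊆ {K : Subgroup A | K ≠ ⊤}, IsChain (· ≤ ·) c → ∀ y ∈ c,
      ∃ ub ∈ {K : Subgroup A | K ≠ ⊤}, ∀ z ∈ c, z ≤ ub := by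
    intro c hcs hchain y hy
    have hne : c.Nonempty := ⟨y, hy⟩
    refine ⟨sSup c, ?_, fun z hz => le_sSup hz⟩
    intro htop
    have hdir : DirectedOn (· ≤ ·) c := hchain.directedOn
    haveI : Nonempty c := hne.to_subtype
    have hdir2 : Directed (· ⊆ ·) (fun K : c => (K : Set A)) := by
      intro i j
      obtain ⟨k, hk, hik, hjk⟩ := hdir i i.2 j j.2
      exact ⟨⟨k, hk⟩, hik, hjk⟩
    have hsub : (hSfin.toFinset : Set A) ⊆ ⋃ K : c, (K : Set A) := by
      intro x hx
      have hx' : x ∈ sSup c := htop ▸ Subgroup.mem_top x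
      obtain ⟨K, hKc, hxK⟩ := (Subgroup.mem_sSup_of_directedOn hne hdir).mp hx'
      exact Set.mem_iUnion.mpr ⟨⟨K, hKc⟩, hxK⟩
    obtain ⟨⟨K, hKc⟩, hSK⟩ := hdir2.exists_mem_subset_of_finset_subset_biUnion hsub
    have hle : (⊤ : Subgroup A) ≤ K := by
      rw [← hScl]
      refine (Subgroup.closure_le K).mpr fun x hx => hSK ?_
      simpa using hx
    exact hcs hKc (top_le_iff.mp hle)
  obtain ⟨M, hHM, hMmem, hMmax⟩ :=
    zorn_le_nonempty₀ {K : Subgroup A | K ≠ ⊤} hchaincond H hH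
  exact ⟨M, ⟨hMmem, fun B hMB =>
    Classical.byContradiction fun hB => absurd (hMmax hB hMB.le) hMB.not_ge⟩, hHM⟩

/-- The abelianization of a finitely generated relatively simple group is cyclic of
prime power order (possibly trivial, i.e. of order `p ^ 0`). -/
theorem stmt6 {G : Type*} [Group G] (hfg : Group.FG G)
    (hrel : ∃ N : Subgroup G, N.Normal ∧ N ≠ ⊤ ∧
        ∀ M : Subgroup G, M.Normal → M ≠ ⊤ → M ≤ N) :
    IsCyclic (Abelianization G) ∧
      ∃ p k : ℕ, p.Prime ∧ Nat.card (Abelianization G) = p ^ k := by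
  obtain ⟨N, hNnorm, hNtop, hNmax⟩ := hrel
  set A := Abelianization G with hA
  let φ : G →* A := Abelianization.of
  have hφ : Function.Surjective φ := fun x => Quotient.inductionOn' x fun g => ⟨g, rfl⟩
  have hAfg : Group.FG A := Group.fg_of_surjective hφ
  -- any coatom of `A` equals `N.map φ`
  have hcoa : ∀ Hc : Subgroup A, IsCoatom Hc → Hc = N.map φ := by
    intro Hc hHc
    have hker : φ.ker ≤ Hc.comap φ := by
      intro x hx
      have : φ x = 1 := hx
      exact Subgroup.mem_comap.mpr (by rw [this]; exact one_mem Hc)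
    have hcc : IsCoatom (Hc.comap φ) := by
      constructor
      · intro h
        have h2 := congrArg (Subgroup.map φ) h
        rw [Subgroup.map_comap_eq_self_of_surjective hφ,
          Subgroup.map_top_of_surjective φ hφ] at h2
        exact hHc.1 h2
      · intro B hB
        have hkerB : φ.ker ≤ B := le_trans hker hB.le
        have h1 : Hc < B.map φ := by
          refine lt_of_le_of_ne ?_ ?_
          · rw [← Subgroup.map_comap_eq_self_of_surjective hφ Hc]
            exact Subgroup.map_mono hB.le
          · intro hEq
            apply hB.ne
            rw [hEq, Subgroup.comap_map_eq_self hkerB]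
        have h2 : B.map φ = ⊤ := hHc.2 _ h1
        have h3 := congrArg (Subgroup.comap φ) h2
        rwa [Subgroup.comap_map_eq_self hkerB, Subgroup.comap_top] at h3
    have hHcnorm : (Hc.comap φ).Normal := by
      haveI : Hc.Normal := ⟨fun n hn g => by simpa [mul_comm] using hn⟩
      infer_instance
    have hle : Hc.comap φ ≤ N := hNmax _ hHcnorm hcc.1
    have heq : Hc.comap φ = N := by
      rcases eq_or_lt_of_le hle with h | h
      · exact h
      · exact absurd (hcc.2 _ h) hNtop
    rw [← Subgroup.map_comap_eq_self_of_surjective hφ Hc, heq]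
  by_cases htriv : (⊤ : Subgroup A) = ⊥
  · -- trivial abelianization
    haveI : Subsingleton A := by
      refine ⟨fun x y => ?_⟩
      have hx : x ∈ (⊥ : Subgroup A) := htriv ▸ Subgroup.mem_top x
      have hy : y ∈ (⊥ : Subgroup A) := htriv ▸ Subgroup.mem_top y
      rw [Subgroup.mem_bot] at hx hy
      rw [hx, hy]
    refine ⟨isCyclic_of_subsingleton, 2, 0, Nat.prime_two, ?_⟩
    simpa using Nat.card_of_subsingleton (1 : A)
  · -- nontrivial: there is a unique coatom `M`, containing every proper subgroup
    obtain ⟨M, hM, -⟩ := exists_coatom_ge_of_fg' hAfg (fun h => htriv (h ▸ rfl) : (⊥ : Subgroup A) ≠ ⊤)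
    have hall : ∀ H : Subgroup A, H ≠ ⊤ → H ≤ M := by
      intro H hH
      obtain ⟨M', hM', hHM'⟩ := exists_coatom_ge_of_fg' hAfg hH
      rwa [hcoa M' hM', ← hcoa M hM] at hHM'
    obtain ⟨a, -, haM⟩ := SetLike.exists_of_lt (lt_top_iff_ne_top.mpr hM.1)
    have hgen : Subgroup.zpowers a = ⊤ := by
      by_contra h
      exact haM (hall _ h (Subgroup.mem_zpowers a))
    have hcyc : IsCyclic A := ⟨⟨a, (Subgroup.eq_top_iff' _).1 hgen⟩⟩
    -- if powers `a^s`, `a^t` with `s`, `t` coprime, one of them generates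
    have hC : ∀ s t : ℕ, Nat.Coprime s t →
        Subgroup.zpowers (a ^ s) = ⊤ ∨ Subgroup.zpowers (a ^ t) = ⊤ := by
      intro s t hst
      by_contra h
      push_neg at h
      obtain ⟨h1, h2⟩ := h
      have hs : a ^ s ∈ M := hall _ h1 (Subgroup.mem_zpowers _)
      have ht : a ^ t ∈ M := hall _ h2 (Subgroup.mem_zpowers _)
      obtain ⟨u, v, huv⟩ := hst.isCoprime
      have : a ∈ M := by
        have : a = (a ^ (s : ℤ)) ^ u * (a ^ (t : ℤ)) ^ v := by
          rw [← zpow_mul, ← zpow_mul, ← zpow_add, ← mul_comm u s, ← mul_comm v t, huv, zpow_one]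
        rw [this]
        exact mul_mem (Subgroup.zpow_mem M (by simpa using hs) u)
          (Subgroup.zpow_mem M (by simpa using ht) v)
      exact haM this
    -- a generating power forces coprimality with the order
    have hkey : ∀ s : ℕ, Subgroup.zpowers (a ^ s) = ⊤ → Nat.Coprime s (orderOf a) := by
      intro s hs
      have ha : a ∈ Subgroup.zpowers (a ^ s) := (Subgroup.eq_top_iff' _).1 hs a
      obtain ⟨k, hk⟩ := ha
      have hk' : (a ^ s) ^ k = a := hk
      have h1 : a ^ ((s : ℤ) * k - 1) = 1 := by
        rw [zpow_sub, zpow_one, zpow_mul, zpow_natCast, hk', mul_inv_cancel]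
      have h2 : ((orderOf a : ℤ)) ∣ (s : ℤ) * k - 1 := orderOf_dvd_iff_zpow_eq_one.mpr h1
      obtain ⟨c, hc⟩ := h2
      rw [← Nat.isCoprime_iff_coprime]
      exact ⟨k, -c, by linarith [hc]⟩
    have h23 := hC 2 3 (by norm_num)
    have hn0 : orderOf a ≠ 0 := by
      intro h0
      rcases h23 with h | h
      · have := hkey 2 h; rw [h0, Nat.coprime_zero_right] at this; omega
      · have := hkey 3 h; rw [h0, Nat.coprime_zero_right] at this; omega
    have hcard : Nat.card A = orderOf a := by
      rw [← Nat.card_zpowers, hgen, Subgroup.card_top]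
    set n := orderOf a with hn
    by_cases hn1 : n = 1
    · exact ⟨hcyc, 2, 0, Nat.prime_two, by rw [hcard, hn1, pow_zero]⟩
    · refine ⟨hcyc, n.minFac, n.primeFactorsList.length, Nat.minFac_prime hn1, ?_⟩
      rw [hcard]
      refine Nat.eq_prime_pow_of_unique_prime_dvd hn0 ?_
      intro q hq hqn
      by_contra hne
      have hpq : Nat.Coprime n.minFac q :=
        (Nat.coprime_primes (Nat.minFac_prime hn1) hq).mpr (Ne.symm hne)
      have hpn : n.minFac ∣ n := Nat.minFac_dvd n
      rcases hC n.minFac q hpq with h | h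
      · have hc := hkey _ h
        have : n.minFac ∣ 1 := by
          have := Nat.dvd_gcd hpn (dvd_refl n.minFac)
          rw [Nat.Coprime] at hc
          calc n.minFac ∣ Nat.gcd n.minFac n := Nat.dvd_gcd (dvd_refl _) hpn
            _ = 1 := hc
        exact Nat.Prime.one_lt (Nat.minFac_prime hn1) |>.ne' (Nat.dvd_one.mp this)
      · have hc := hkey _ h
        have : q ∣ 1 := by
          calc q ∣ Nat.gcd q n := Nat.dvd_gcd (dvd_refl _) hqn
            _ = 1 := hc
        exact hq.one_lt.ne' (Nat.dvd_one.mp this)
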